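/- Let f ∈ B(X,Y) be the unique fixed point of the RB operator Φ, and let G := {(x, f(x)) : x ∈ X} ⊆ X × Y be its graph. For ℓ = 1,…,m set X_ℓ := K_ℓ and h_ℓ(x,y) := (b_ℓ(x), v_ℓ(x,y)); for ℓ = m+1,…,m+n set X_ℓ := V_{ℓ−m} and h_ℓ(x,y) := (u_{ℓ−m}(x), w_{ℓ−m}(x,y)). Then G is a local attractor of the local IFS (X × Y, {h_ℓ : X_ℓ × Y → X × Y}_{ℓ=1}^{m+n}), i.e., G = ⋃_{ℓ=1}^{m+n} h_ℓ( G ∩ (X_ℓ × Y) ). -/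
import Mathlib


open Bornology

/-- Let `f` be the unique bounded fixed point of the RB operator `Φ` and let
`G := {(x, f x) : x ∈ X}` be its graph.  With the maps `h_j(x,y) := (b j x, v j x y)` on
`K j × Y` and `h_i(x,y) := (u i x, w i x y)` on `V i × Y`, the graph `G` is a local attractor
of the associated local IFS:  `G = ⋃_ℓ h_ℓ (G ∩ (X_ℓ × Y))`. -/
theorem graph_is_local_attractor {X Y : Type*} [Nonempty X]
    [NormedAddCommGroup Y] [NormedSpace ℝ Y] [CompleteSpace Y]
    {m n : ℕ} (K : Set X) (Kj : Fin m → Set X) (V : Fin n → Set X)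
    (b : Fin m → X → X) (u : Fin n → X → X)
    (hbinj : ∀ j, Set.InjOn (b j) (Kj j)) (huinj : ∀ i, Set.InjOn (u i) (V i))
    (hKcov : (⋃ j, b j '' Kj j) = K)
    (hVcov : (⋃ i, u i '' V i) = Set.univ \ K)
    (hdisj : Pairwise (Function.onFun Disjoint
      (Sum.elim (fun j : Fin m => b j '' Kj j) (fun i : Fin n => u i '' V i))))
    (v : Fin m → X → Y → Y) (w : Fin n → X → Y → Y)
    (hvb : ∀ j y, IsBounded ((fun x => v j x y) '' Kj j))
    (hwb : ∀ i y, IsBounded ((fun x => w i x y) '' V i))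
    (ℓ₁ ℓ₂ : ℝ) (hℓ₁0 : 0 ≤ ℓ₁) (hℓ₁ : ℓ₁ < 1) (hℓ₂0 : 0 ≤ ℓ₂) (hℓ₂ : ℓ₂ < 1)
    (hv : ∀ j, ∀ x ∈ Kj j, ∀ y₁ y₂ : Y, ‖v j x y₁ - v j x y₂‖ ≤ ℓ₁ * ‖y₁ - y₂‖)
    (hw : ∀ i, ∀ x ∈ V i, ∀ y₁ y₂ : Y, ‖w i x y₁ - w i x y₂‖ ≤ ℓ₂ * ‖y₁ - y₂‖)
    (Φ : (X → Y) → (X → Y))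
    (hΦb : ∀ f : X → Y, ∀ j, ∀ x ∈ Kj j, Φ f (b j x) = v j x (f x))
    (hΦu : ∀ f : X → Y, ∀ i, ∀ x ∈ V i, Φ f (u i x) = w i x (f x))
    (f : X → Y) (hfb : IsBounded (Set.range f)) (hfix : Φ f = f) :
    {pt : X × Y | pt.2 = f pt.1} =
      (⋃ j, (fun pt : X × Y => (b j pt.1, v j pt.1 pt.2)) ''
        ({pt : X × Y | pt.2 = f pt.1} ∩ (Kj j) ×ˢ (Set.univ : Set Y))) ∪
      (⋃ i, (fun pt : X × Y => (u i pt.1, w i pt.1 pt.2)) ''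
        ({pt : X × Y | pt.2 = f pt.1} ∩ (V i) ×ˢ (Set.univ : Set Y))) := by
  ext ⟨x, y⟩
  simp only [Set.mem_setOf_eq, Set.mem_union, Set.mem_iUnion, Set.mem_image,
    Set.mem_inter_iff, Set.mem_prod, Set.mem_univ, and_true]
  constructor
  · rintro rfl
    by_cases hx : x ∈ K
    · rw [← hKcov] at hx
      obtain ⟨S, ⟨j, rfl⟩, x', hx', rfl⟩ := hx
      left
      refine ⟨j, (x', f x'), ⟨rfl, hx'⟩, ?_⟩
      have : Φ f (b j x') = v j x' (f x') := hΦb f j x' hx'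
      rw [hfix] at this
      simp [this]
    · have hx2 : x ∈ Set.univ \ K := ⟨trivial, hx⟩
      rw [← hVcov] at hx2
      obtain ⟨S, ⟨i, rfl⟩, x', hx', rfl⟩ := hx2
      right
      refine ⟨i, (x', f x'), ⟨rfl, hx'⟩, ?_⟩
      have : Φ f (u i x') = w i x' (f x') := hΦu f i x' hx'
      rw [hfix] at this
      simp [this]
  · rintro (⟨j, ⟨x', y'⟩, ⟨hy', hx'⟩, heq⟩ | ⟨i, ⟨x', y'⟩, ⟨hy', hx'⟩, heq⟩)
    · simp only at hy' hx' heq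
      obtain ⟨h1, h2⟩ := Prod.ext_iff.mp heq
      subst hy'
      have : Φ f (b j x') = v j x' (f x') := hΦb f j x' hx'
      rw [hfix] at this
      simp only at h1 h2
      rw [← h1, ← h2, this]
    · simp only at hy' hx' heq
      obtain ⟨h1, h2⟩ := Prod.ext_iff.mp heq
      subst hy'
      have : Φ f (u i x') = w i x' (f x') := hΦu f i x' hx'
      rw [hfix] at this
      simp only at h1 h2
      rw [← h1, ← h2, this]
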